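/- Let A be an n×n real stochastic matrix (all entries nonnegative, every row sums to 1) that is irreducible (for all i, j there exists m ≥ 1 with (A^m)_{ij} > 0) and periodic: there exist t ≥ 2 and a surjective map P : {1,…,n} → ℤ/tℤ such that A_{ij} > 0 implies P(j) = P(i) + 1. Then det(I − A^{(2)}) = 0, where A^{(2)} is the second induced matrix of A on ℝ^{C(n,2)}. -/
import Mathlib


open Matrix BigOperators

/-- The second induced matrix `A⁽²⁾` of an `n×n` matrix `A`, acting on the
space indexed by pairs `(i,j)` with `i < j`; its entries are the permanents of
the corresponding `2×2` submatrices of `A`. -/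
def secondInduced {n : ℕ} (A : Matrix (Fin n) (Fin n) ℝ) :
    Matrix {p : Fin n × Fin n // p.1 < p.2} {p : Fin n × Fin n // p.1 < p.2} ℝ :=
  Matrix.of fun p q =>
    A p.1.1 q.1.1 * A p.1.2 q.1.2 + A p.1.1 q.1.2 * A p.1.2 q.1.1

/-- Summing a function of ordered pairs, symmetrized, over strictly increasing
pairs equals summing it over all off-diagonal ordered pairs. -/
lemma sum_lt_pairs {n : ℕ} (f : Fin n × Fin n → ℝ) :
    ∑ q : {p : Fin n × Fin n // p.1 < p.2}, (f q.1 + f q.1.swap)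
      = ∑ p ∈ Finset.univ.filter (fun p : Fin n × Fin n => p.1 ≠ p.2), f p := by
  have h1 : ∑ q : {p : Fin n × Fin n // p.1 < p.2}, f q.1
      = ∑ p ∈ Finset.univ.filter (fun p : Fin n × Fin n => p.1 < p.2), f p :=
    (Finset.sum_subtype _ (by simp) f).symm
  have h2 : ∑ q : {p : Fin n × Fin n // p.1 < p.2}, f q.1.swap
      = ∑ p ∈ Finset.univ.filter (fun p : Fin n × Fin n => p.2 < p.1), f p := by
    rw [show (∑ q : {p : Fin n × Fin n // p.1 < p.2}, f q.1.swap)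
        = ∑ p ∈ Finset.univ.filter (fun p : Fin n × Fin n => p.1 < p.2), f p.swap from
      (Finset.sum_subtype _ (by simp) (fun p : Fin n × Fin n => f p.swap)).symm]
    refine Finset.sum_nbij' (i := fun p : Fin n × Fin n => p.swap)
      (j := fun p : Fin n × Fin n => p.swap) ?_ ?_ ?_ ?_ ?_
    · intro p hp
      simp only [Finset.mem_filter, Finset.mem_univ, true_and] at hp ⊢
      simpa using hp
    · intro p hp
      simp only [Finset.mem_filter, Finset.mem_univ, true_and] at hp ⊢
      simpa using hp
    · intro p _; simp
    · intro p _; simp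
    · intro p _; rfl
  rw [Finset.sum_add_distrib, h1, h2]
  rw [show (Finset.univ.filter (fun p : Fin n × Fin n => p.1 ≠ p.2))
      = (Finset.univ.filter (fun p : Fin n × Fin n => p.1 < p.2)) ∪
        (Finset.univ.filter (fun p : Fin n × Fin n => p.2 < p.1)) by
    rw [← Finset.filter_or]; apply Finset.filter_congr; intro p _
    constructor
    · intro h; exact h.lt_or_gt
    · rintro (h | h); exacts [h.ne, h.ne']]
  rw [Finset.sum_union]
  rw [Finset.disjoint_filter]
  intro p _ h1 h2
  exact absurd (h1.trans h2) (lt_irrefl _)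

theorem det_one_sub_secondInduced_eq_zero {n : ℕ}
    (A : Matrix (Fin n) (Fin n) ℝ)
    (hAnn : ∀ i j, 0 ≤ A i j) (hrow : ∀ i, ∑ j, A i j = 1)
    (hirr : ∀ i j, ∃ m : ℕ, 1 ≤ m ∧ 0 < (A ^ m) i j)
    (t : ℕ) (ht : 2 ≤ t)
    (P : Fin n → ZMod t) (hPsurj : Function.Surjective P)
    (hP : ∀ i j, 0 < A i j → P j = P i + 1) :
    Matrix.det (1 - secondInduced A) = 0 := by
  haveI : Fact (1 < t) := ⟨ht⟩
  -- key vanishing lemma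
  have hz : ∀ i j l m : Fin n, ¬ (P l = P i + 1 ∧ P m = P j + 1) → A i l * A j m = 0 := by
    intro i j l m h
    rcases (hAnn i l).lt_or_eq with h1 | h1
    · rcases (hAnn j m).lt_or_eq with h2 | h2
      · exact absurd ⟨hP i l h1, hP j m h2⟩ h
      · rw [← h2, mul_zero]
    · rw [← h1, zero_mul]
  set v : {p : Fin n × Fin n // p.1 < p.2} → ℝ :=
    fun q => if P q.1.1 = P q.1.2 then 0 else 1 with hv
  have hvapp : ∀ q : {p : Fin n × Fin n // p.1 < p.2},
      v q = if P q.1.1 = P q.1.2 then 0 else 1 := fun q => rfl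
  rw [← Matrix.exists_mulVec_eq_zero_iff]
  refine ⟨v, ?_, ?_⟩
  · -- v ≠ 0
    obtain ⟨i, hi⟩ := hPsurj 0
    obtain ⟨j, hj⟩ := hPsurj 1
    have hij : i ≠ j := by
      intro h; rw [h, hj] at hi; exact one_ne_zero hi
    have hPij : P i ≠ P j := by rw [hi, hj]; exact zero_ne_one
    intro h0
    rcases hij.lt_or_gt with hlt | hlt
    · have := congrFun h0 ⟨(i, j), hlt⟩
      simp only [hv, Pi.zero_apply] at this
      rw [if_neg hPij] at this
      exact one_ne_zero this
    · have := congrFun h0 ⟨(j, i), hlt⟩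
      simp only [hv, Pi.zero_apply] at this
      rw [if_neg hPij.symm] at this
      exact one_ne_zero this
  · -- (1 - A⁽²⁾) *ᵥ v = 0
    funext q
    rw [Matrix.sub_mulVec, Matrix.one_mulVec, Pi.sub_apply, Pi.zero_apply, sub_eq_zero]
    show v q = ∑ r, secondInduced A q r * v r
    obtain ⟨⟨i, j⟩, hqlt⟩ := q
    by_cases hpq : P i = P j
    · -- v q = 0, every term vanishes
      rw [hvapp, if_pos hpq]
      symm
      apply Finset.sum_eq_zero
      rintro ⟨⟨l, m⟩, hr⟩ _
      simp only [secondInduced, Matrix.of_apply, hvapp]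
      by_cases hlm : P l = P m
      · simp only [if_pos hlm, mul_zero]
      · rw [if_neg hlm]
        have e1 : A i l * A j m = 0 := by
          apply hz; rintro ⟨a, b⟩; rw [a, b, hpq] at hlm; exact hlm rfl
        have e2 : A i m * A j l = 0 := by
          apply hz; rintro ⟨a, b⟩; rw [a, b, hpq] at hlm; exact hlm rfl
        rw [e1, e2, add_zero, mul_one]
    · -- v q = 1
      rw [hvapp, if_neg hpq]
      have step1 : ∑ r : {p : Fin n × Fin n // p.1 < p.2}, secondInduced A ⟨(i, j), hqlt⟩ r * v r
          = ∑ r : {p : Fin n × Fin n // p.1 < p.2},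
              (A i r.1.1 * A j r.1.2 + A i r.1.2 * A j r.1.1) := by
        apply Finset.sum_congr rfl
        rintro ⟨⟨l, m⟩, hr⟩ _
        simp only [secondInduced, Matrix.of_apply, hvapp]
        by_cases hlm : P l = P m
        · have e1 : A i l * A j m = 0 := by
            apply hz; rintro ⟨a, b⟩
            exact hpq (add_right_cancel (a.symm.trans (hlm.trans b)))
          have e2 : A i m * A j l = 0 := by
            apply hz; rintro ⟨a, b⟩
            exact hpq (add_right_cancel ((a.symm.trans hlm.symm).trans b))
          rw [if_pos hlm, e1, e2]; ring
        · rw [if_neg hlm, mul_one]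
      rw [step1]
      have := sum_lt_pairs (fun p : Fin n × Fin n => A i p.1 * A j p.2)
      simp only [Prod.fst_swap, Prod.snd_swap] at this
      rw [this]
      have htotal : ∑ p : Fin n × Fin n, A i p.1 * A j p.2 = 1 := by
        rw [Fintype.sum_prod_type]
        simp only [← Finset.mul_sum, hrow j, mul_one, hrow i]
      have hdiag : ∑ p ∈ Finset.univ.filter (fun p : Fin n × Fin n => ¬ p.1 ≠ p.2),
          A i p.1 * A j p.2 = 0 := by
        apply Finset.sum_eq_zero
        intro p hp
        apply hz
        rintro ⟨a, b⟩
        have : p.1 = p.2 := by simpa using (Finset.mem_filter.mp hp).2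
        rw [this] at a
        exact hpq (add_right_cancel (a.symm.trans b))
      have hsplit := Finset.sum_filter_add_sum_filter_not Finset.univ
        (fun p : Fin n × Fin n => p.1 ≠ p.2) (fun p => A i p.1 * A j p.2)
      rw [htotal, hdiag, add_zero] at hsplit
      exact hsplit.symm
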